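/- Let R be a unital non-associative ring, G a commutative monoid, π a G-derivation on R, S = R[G;π] the Ore monoid ring, and s ∈ S^G. If condition (D7) holds, then for all u,v ∈ S the associator (u,s,v) lies in the additive subgroup of S generated by the products (r,s,t)·w with r,t ∈ R and w ∈ S; in particular, if (r,s,t) = 0 for all r,t ∈ R, then s ∈ N_m(S). If condition (D8) holds, then for all u,v ∈ S the associator (u,v,s) lies in the additive subgroup of S generated by the products (r,t,s)·w with r,t ∈ R and w ∈ S; in particular, if (r,t,s) = 0 for all r,t ∈ R, then s ∈ N_r(S). -/

import Mathlib

open scoped Classical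

/-! Common framework: Ore monoid rings `R[G;π]` over a unital non-associative ring `R`
and a monoid `G`.  A `G`-derivation `π = {π^a_b}` is encoded as a map
`π : G → R → (G →₀ R)`, where `π a r b = π^a_b(r)`; axiom (D0) (finite support in `b`)
is built into the `Finsupp` encoding.  The Ore monoid ring `S = R[G;π]` is the
additive group `G →₀ R` of finitely supported formal sums `Σ r_a xᵃ`
(with `Finsupp.single a r` representing `r xᵃ`), equipped with the
multiplication `GDeriv.mul` below. -/

/-- A two-sided ideal with respect to a (possibly non-associative, non-unital)
multiplication `m` on an additive group `A`. -/
structure IsIdealWith {A : Type*} [AddCommGroup A] (m : A → A → A) (J : Set A) : Prop where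
  zero_mem : (0 : A) ∈ J
  add_mem : ∀ {x y : A}, x ∈ J → y ∈ J → x + y ∈ J
  neg_mem : ∀ {x : A}, x ∈ J → -x ∈ J
  mul_mem_left : ∀ (r : A) {x : A}, x ∈ J → m r x ∈ J
  mul_mem_right : ∀ {x : A} (r : A), x ∈ J → m x r ∈ J

/-- The subset `F` of `A` is a field with respect to the multiplication `m` with
identity `one`: it is a commutative unital subring in which every nonzero element
has a multiplicative inverse. -/
def IsFieldWith {A : Type*} [AddCommGroup A] (m : A → A → A) (one : A) (F : Set A) : Prop :=
  one ∈ F ∧ (∀ x ∈ F, ∀ y ∈ F, x + y ∈ F) ∧ (∀ x ∈ F, -x ∈ F) ∧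
  (∀ x ∈ F, ∀ y ∈ F, m x y ∈ F) ∧ (∀ x ∈ F, ∀ y ∈ F, m x y = m y x) ∧
  (∀ x ∈ F, x ≠ 0 → ∃ y ∈ F, m x y = one ∧ m y x = one)

/-- A `G`-derivation on `R`: axioms (D0)–(D4).  Here `π a r b` denotes `π^a_b(r)`,
and (D0) holds by the finite support of `π a r : G →₀ R`. -/
structure GDeriv (R : Type*) [NonAssocRing R] (G : Type*) [Monoid G] where
  /-- the family of maps; `π a r b = π^a_b(r)` -/
  π : G → R → (G →₀ R)
  /-- (D1): `π^e_e = id` and `π^e_a = 0` for `a ≠ e` -/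
  d1 : ∀ r : R, π 1 r = Finsupp.single 1 r
  /-- (D2): `π^a_b(1) = δ_{a,b}` -/
  d2 : ∀ a : G, π a (1 : R) = Finsupp.single a (1 : R)
  /-- (D3): each `π^a_b` is additive -/
  d3 : ∀ (a : G) (r s : R), π a (r + s) = π a r + π a s
  /-- (D4): `π^{ab}_c = Σ_{df = c} π^a_d ∘ π^b_f` -/
  d4 : ∀ (a b : G) (r : R),
    π (a * b) r = (π b r).sum fun f s => (π a s).sum fun d t => Finsupp.single (d * f) t

namespace GDeriv

variable {R : Type*} [NonAssocRing R] {G : Type*} [Monoid G] (P : GDeriv R G)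

/-- The multiplication of the Ore monoid ring `S = R[G;π]` on `G →₀ R`:
the biadditive extension of `(r xᵃ)(s xᵇ) = Σ_c r π^a_c(s) x^{cb}`. -/
noncomputable def mul (u v : G →₀ R) : G →₀ R :=
  u.sum fun a r => v.sum fun b s => (P.π a s).sum fun c t => Finsupp.single (c * b) (r * t)

/-- The multiplicative identity `1·xᵉ` of `S`. -/
noncomputable def one (_P : GDeriv R G) : G →₀ R := Finsupp.single 1 1

/-- `R^G = {r ∈ R : π^a_b(r) = δ_{a,b} r}`. -/
def fixed : Set R := {r | ∀ a : G, P.π a r = Finsupp.single a r}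

/-- `S^G = Σ_a R^G xᵃ`, the elements of `S` all of whose coefficients lie in `R^G`. -/
def fixedS : Set (G →₀ R) := {u | ∀ c : G, u c ∈ P.fixed}

/-- (D7): every `π^a_b` is left `R^G`-linear. -/
def LeftLinear : Prop := ∀ a b : G, ∀ s ∈ P.fixed, ∀ r : R, P.π a (s * r) b = s * P.π a r b

/-- (D8): every `π^a_b` is right `R^G`-linear. -/
def RightLinear : Prop := ∀ a b : G, ∀ r : R, ∀ s ∈ P.fixed, P.π a (r * s) b = P.π a r b * s

/-- `π` is strong if (D7) or (D8) holds. -/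
def Strong : Prop := P.LeftLinear ∨ P.RightLinear

/-- (D6): `π^a_a = id_R` for all `a ∈ G` (i.e. `π` is unital). -/
def Unital : Prop := ∀ (a : G) (r : R), P.π a r a = r

/-- `π` is commutative: `π^a_b ∘ π^c_d = π^c_d ∘ π^a_b`. -/
def Commutes : Prop := ∀ (a b c d : G) (r : R), P.π a (P.π c r d) b = P.π c (P.π a r b) d

/-- `π` is well-ordered: there is a well-order on `G` whose strict part `lt`
satisfies `π^a_b = 0` whenever `a ≺ b`. -/
def WellOrdered : Prop :=
  ∃ lt : G → G → Prop, IsWellOrder G lt ∧ ∀ a b : G, lt a b → ∀ r : R, P.π a r b = 0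

/-- The extension `π̃^a_b : S → S`, `π̃^a_b(Σ_c r_c x^c) = Σ_c π^a_b(r_c) x^c`. -/
noncomputable def ext (a b : G) (u : G →₀ R) : G →₀ R := u.sum fun c r => Finsupp.single c (P.π a r b)

/-- The commutator `[u,v] = uv - vu` in `S`. -/
noncomputable def commS (u v : G →₀ R) : G →₀ R := P.mul u v - P.mul v u

/-- The associator `(u,v,w) = (uv)w - u(vw)` in `S`. -/
noncomputable def assocS (u v w : G →₀ R) : G →₀ R := P.mul (P.mul u v) w - P.mul u (P.mul v w)

/-- The left nucleus `N_l(S)`. -/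
def Nl : Set (G →₀ R) := {u | ∀ v w, P.assocS u v w = 0}

/-- The middle nucleus `N_m(S)`. -/
def Nm : Set (G →₀ R) := {u | ∀ v w, P.assocS v u w = 0}

/-- The right nucleus `N_r(S)`. -/
def Nr : Set (G →₀ R) := {u | ∀ v w, P.assocS v w u = 0}

/-- The commuter `C(S)`. -/
def CS : Set (G →₀ R) := {u | ∀ v, P.mul u v = P.mul v u}

/-- The center `Z(S) = C(S) ∩ N_l(S) ∩ N_m(S) ∩ N_r(S)`. -/
def Z : Set (G →₀ R) := P.CS ∩ (P.Nl ∩ P.Nm ∩ P.Nr)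

/-- `Z(S)^G = {s ∈ Z(S) : π̃^a_b(s) = δ_{a,b} s}`. -/
def ZG : Set (G →₀ R) :=
  {s | s ∈ P.Z ∧ ∀ a b : G, P.ext a b s = if a = b then s else 0}

/-- `R` is `G`-simple: `{0}` and `R` are the only `G`-invariant ideals of `R`. -/
def RSimple : Prop :=
  ∀ J : Set R, IsIdealWith (· * ·) J → (∀ a b : G, ∀ r ∈ J, P.π a r b ∈ J) →
    J = {0} ∨ J = Set.univ

/-- `S` is `G`-simple: `{0}` and `S` are the only ideals of `S` invariant under all `π̃^a_b`. -/
def SSimple : Prop :=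
  ∀ J : Set (G →₀ R), IsIdealWith P.mul J → (∀ a b : G, ∀ u ∈ J, P.ext a b u ∈ J) →
    J = {0} ∨ J = Set.univ

end GDeriv

namespace GDeriv

variable {R : Type*} [NonAssocRing R] {G : Type*} [CommMonoid G] (P : GDeriv R G)

lemma pi_zero (a : G) : P.π a 0 = 0 := by
  have h := P.d3 a 0 0
  rw [add_zero] at h
  exact left_eq_add.mp h

lemma mul_single_right (u : G →₀ R) (b : G) (t : R) :
    P.mul u (Finsupp.single b t)
      = u.sum fun a r => (P.π a t).sum fun c x => Finsupp.single (c * b) (r * x) := by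
  unfold mul
  refine Finsupp.sum_congr fun a _ => ?_
  rw [Finsupp.sum_single_index]
  rw [pi_zero, Finsupp.sum_zero_index]

lemma single_mul (a : G) (r : R) (v : G →₀ R) :
    P.mul (Finsupp.single a r) v
      = v.sum fun b t => (P.π a t).sum fun c x => Finsupp.single (c * b) (r * x) := by
  unfold mul
  refine Finsupp.sum_single_index ?_
  simp only [zero_mul, Finsupp.single_zero, Finsupp.sum, Finset.sum_const_zero]

lemma mul_fixed {s : G →₀ R} (hs : s ∈ P.fixedS) (u : G →₀ R) :
    P.mul u s = u.sum fun a r => s.sum fun c sc => Finsupp.single (a * c) (r * sc) := by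
  unfold mul
  refine Finsupp.sum_congr fun a _ => Finsupp.sum_congr fun c _ => ?_
  rw [hs c a, Finsupp.sum_single_index (by simp)]

lemma single_mul_fixed {s : G →₀ R} (hs : s ∈ P.fixedS) (a : G) (r : R) :
    P.mul (Finsupp.single a r) s = s.sum fun c sc => Finsupp.single (a * c) (r * sc) := by
  rw [P.mul_fixed hs, Finsupp.sum_single_index (by simp)]

lemma add_mul' (u v w : G →₀ R) : P.mul (u + v) w = P.mul u w + P.mul v w := by
  unfold mul
  refine Finsupp.sum_add_index' (fun a => ?_) (fun a r1 r2 => ?_)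
  · simp only [zero_mul, Finsupp.single_zero, Finsupp.sum, Finset.sum_const_zero]
  · simp only [add_mul, Finsupp.single_add, Finsupp.sum_add]

lemma mul_add' (u v w : G →₀ R) : P.mul u (v + w) = P.mul u v + P.mul u w := by
  unfold mul
  rw [← Finsupp.sum_add]
  refine Finsupp.sum_congr fun a _ => ?_
  refine Finsupp.sum_add_index' (fun b => ?_) (fun b s1 s2 => ?_)
  · rw [pi_zero, Finsupp.sum_zero_index]
  · rw [P.d3]
    exact Finsupp.sum_add_index' (fun c => by simp)
      (fun c t1 t2 => by simp only [mul_add, Finsupp.single_add])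

lemma zero_mul' (v : G →₀ R) : P.mul 0 v = 0 := Finsupp.sum_zero_index

lemma mul_zero' (u : G →₀ R) : P.mul u 0 = 0 := by
  unfold mul
  simp only [Finsupp.sum_zero_index, Finsupp.sum, Finsupp.support_zero, Finset.sum_empty,
    Finset.sum_const_zero]

lemma assoc_add_left (u u' s v : G →₀ R) :
    P.assocS (u + u') s v = P.assocS u s v + P.assocS u' s v := by
  unfold assocS
  rw [P.add_mul', P.add_mul', P.add_mul']
  abel

lemma assoc_add_right (u s v v' : G →₀ R) :
    P.assocS u s (v + v') = P.assocS u s v + P.assocS u s v' := by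
  unfold assocS
  rw [P.mul_add', P.mul_add', P.mul_add']
  abel

lemma assoc_zero_left (s v : G →₀ R) : P.assocS 0 s v = 0 := by
  unfold assocS
  rw [P.zero_mul', P.zero_mul', P.zero_mul', sub_self]

lemma assoc_zero_right (u s : G →₀ R) : P.assocS u s 0 = 0 := by
  unfold assocS
  rw [P.mul_zero', P.mul_zero', P.mul_zero', sub_self]

/-- Unfolding a sum over `π^{ac}(t)` via (D4). -/
lemma sum_d4 (a c : G) (t : R) (H : G → R → (G →₀ R)) (H0 : ∀ e, H e 0 = 0)
    (Hadd : ∀ e z1 z2, H e (z1 + z2) = H e z1 + H e z2) :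
    (P.π (a * c) t).sum H
      = (P.π c t).sum fun f x => (P.π a x).sum fun d y => H (d * f) y := by
  rw [P.d4, Finsupp.sum_sum_index H0 Hadd]
  refine Finsupp.sum_congr fun f _ => ?_
  rw [Finsupp.sum_sum_index H0 Hadd]
  exact Finsupp.sum_congr fun d _ => Finsupp.sum_single_index (H0 _)

section Left

variable {s : G →₀ R} (hs : s ∈ P.fixedS) (hL : P.LeftLinear)

include hs in
lemma L1form (a b : G) (r t : R) :
    P.mul (P.mul (Finsupp.single a r) s) (Finsupp.single b t)
      = s.sum fun c sc => (P.π (a * c) t).sum fun e z =>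
          Finsupp.single (e * b) ((r * sc) * z) := by
  rw [P.single_mul_fixed hs, P.mul_single_right]
  rw [Finsupp.sum_sum_index
    (fun a' => by simp only [zero_mul, Finsupp.single_zero, Finsupp.sum, Finset.sum_const_zero])
    (fun a' r1 r2 => by simp only [add_mul, Finsupp.single_add, Finsupp.sum_add])]
  refine Finsupp.sum_congr fun c _ => ?_
  rw [Finsupp.sum_single_index
    (by simp only [zero_mul, Finsupp.single_zero, Finsupp.sum, Finset.sum_const_zero])]

include hs hL in
lemma R1form (a b : G) (r t : R) :
    P.mul (Finsupp.single a r) (P.mul s (Finsupp.single b t))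
      = s.sum fun c sc => (P.π (a * c) t).sum fun e z =>
          Finsupp.single (e * b) (r * (sc * z)) := by
  rw [P.mul_single_right, P.single_mul]
  rw [Finsupp.sum_sum_index
    (fun b' => by rw [pi_zero, Finsupp.sum_zero_index])
    (fun b' s1 s2 => by
      rw [P.d3]
      exact Finsupp.sum_add_index' (fun c => by simp)
        (fun c t1 t2 => by simp only [mul_add, Finsupp.single_add]))]
  refine Finsupp.sum_congr fun c _ => ?_
  rw [Finsupp.sum_sum_index
    (fun b' => by rw [pi_zero, Finsupp.sum_zero_index])
    (fun b' s1 s2 => by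
      rw [P.d3]
      exact Finsupp.sum_add_index' (fun c' => by simp)
        (fun c' t1 t2 => by simp only [mul_add, Finsupp.single_add]))]
  have step1 : ((P.π c t).sum fun f x => (Finsupp.single (f * b) (s c * x)).sum
        fun b' s' => (P.π a s').sum fun d y => Finsupp.single (d * b') (r * y))
      = (P.π c t).sum fun f x => (P.π a x).sum fun d y =>
          Finsupp.single (d * (f * b)) (r * (s c * y)) := by
    refine Finsupp.sum_congr fun f _ => ?_
    rw [Finsupp.sum_single_index (by rw [pi_zero, Finsupp.sum_zero_index])]
    have hmap : P.π a (s c * (P.π c t) f)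
        = (P.π a ((P.π c t) f)).mapRange (fun y => s c * y) (mul_zero _) :=
      Finsupp.ext fun d => by
        rw [Finsupp.mapRange_apply]; exact hL a d (s c) (hs c) _
    rw [hmap, Finsupp.sum_mapRange_index (fun d => by simp)]
  rw [step1]
  rw [P.sum_d4 a c t (fun e z => Finsupp.single (e * b) (r * (s c * z)))
    (fun e => by simp)
    (fun e z1 z2 => by simp only [mul_add, Finsupp.single_add])]
  exact Finsupp.sum_congr fun f _ => Finsupp.sum_congr fun d _ => by rw [mul_assoc]

include hs hL in
lemma core7 (a b : G) (r t : R) :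
    P.assocS (Finsupp.single a r) s (Finsupp.single b t)
      = s.sum fun c sc => (P.π (a * c) t).sum fun e z =>
          Finsupp.single (e * b) ((r * sc) * z - r * (sc * z)) := by
  unfold assocS
  rw [P.L1form hs, P.R1form hs hL, ← Finsupp.sum_sub]
  refine Finsupp.sum_congr fun c _ => ?_
  rw [← Finsupp.sum_sub]
  exact Finsupp.sum_congr fun e _ => (Finsupp.single_sub _ _ _).symm

include hs hL in
lemma key7 (a b : G) (r t : R) :
    P.assocS (Finsupp.single a r) s (Finsupp.single b t)
      = (P.π a t).sum fun f x =>
          P.mul (P.assocS (Finsupp.single 1 r) s (Finsupp.single 1 x))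
            (Finsupp.single (f * b) 1) := by
  have hA : ∀ x : R, P.assocS (Finsupp.single 1 r) s (Finsupp.single 1 x)
      = s.sum fun c sc => (P.π c x).sum fun e z =>
          Finsupp.single e ((r * sc) * z - r * (sc * z)) := by
    intro x
    rw [P.core7 hs hL]
    refine Finsupp.sum_congr fun c _ => ?_
    rw [one_mul]
    exact Finsupp.sum_congr fun e _ => by rw [mul_one]
  have hmulA : ∀ (x : R) (g : G),
      P.mul (P.assocS (Finsupp.single 1 r) s (Finsupp.single 1 x))
          (Finsupp.single g 1)
        = s.sum fun c sc => (P.π c x).sum fun e z =>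
            Finsupp.single (e * g) ((r * sc) * z - r * (sc * z)) := by
    intro x g
    rw [hA, P.mul_single_right]
    rw [Finsupp.sum_sum_index
      (fun a' => by simp only [zero_mul, Finsupp.single_zero, Finsupp.sum, Finset.sum_const_zero])
      (fun a' r1 r2 => by simp only [add_mul, Finsupp.single_add, Finsupp.sum_add])]
    refine Finsupp.sum_congr fun c _ => ?_
    rw [Finsupp.sum_sum_index
      (fun a' => by simp only [zero_mul, Finsupp.single_zero, Finsupp.sum, Finset.sum_const_zero])
      (fun a' r1 r2 => by simp only [add_mul, Finsupp.single_add, Finsupp.sum_add])]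
    refine Finsupp.sum_congr fun e _ => ?_
    rw [Finsupp.sum_single_index
      (by simp only [zero_mul, Finsupp.single_zero, Finsupp.sum, Finset.sum_const_zero])]
    rw [P.d2, Finsupp.sum_single_index (by simp), mul_one]
  rw [P.core7 hs hL]
  have hstep : (s.sum fun c sc => (P.π (a * c) t).sum fun e z =>
        Finsupp.single (e * b) ((r * sc) * z - r * (sc * z)))
      = s.sum fun c sc => (P.π a t).sum fun f x => (P.π c x).sum fun d y =>
          Finsupp.single (d * (f * b)) ((r * sc) * y - r * (sc * y)) := by
    refine Finsupp.sum_congr fun c _ => ?_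
    rw [mul_comm a c, P.sum_d4 c a t
      (fun e z => Finsupp.single (e * b) ((r * (s c)) * z - r * ((s c) * z)))
      (fun e => by simp)
      (fun e z1 z2 => by
        simp only [mul_add]
        rw [← Finsupp.single_add]
        congr 1
        abel)]
    exact Finsupp.sum_congr fun f _ => Finsupp.sum_congr fun d _ => by rw [mul_assoc]
  rw [hstep, Finsupp.sum_comm]
  exact Finsupp.sum_congr fun f _ => (hmulA _ _).symm

include hs hL in
lemma mem7 (u v : G →₀ R) :
    P.assocS u s v ∈ AddSubgroup.closure
      {z : G →₀ R | ∃ (r t : R) (w : G →₀ R),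
        z = P.mul (P.assocS (Finsupp.single 1 r) s (Finsupp.single 1 t)) w} := by
  induction u using Finsupp.induction with
  | zero => rw [P.assoc_zero_left]; exact AddSubgroup.zero_mem _
  | single_add a r u' _ _ ih =>
    rw [P.assoc_add_left]
    refine AddSubgroup.add_mem _ ?_ ih
    clear ih
    induction v using Finsupp.induction with
    | zero => rw [P.assoc_zero_right]; exact AddSubgroup.zero_mem _
    | single_add b t v' _ _ ihv =>
      rw [P.assoc_add_right]
      refine AddSubgroup.add_mem _ ?_ ihv
      rw [P.key7 hs hL, Finsupp.sum]
      exact AddSubgroup.sum_mem _ fun f _ =>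
        AddSubgroup.subset_closure ⟨r, (P.π a t) f, Finsupp.single (f * b) 1, rfl⟩

end Left

section Right

variable {s : G →₀ R} (hs : s ∈ P.fixedS) (hR : P.RightLinear)

include hs in
lemma L2form (a b : G) (r t : R) :
    P.mul (P.mul (Finsupp.single a r) (Finsupp.single b t)) s
      = (P.π a t).sum fun c x => s.sum fun e se =>
          Finsupp.single ((c * b) * e) ((r * x) * se) := by
  rw [P.single_mul, Finsupp.sum_single_index
    (by rw [pi_zero]; simp only [Finsupp.sum_zero_index])]
  rw [P.mul_fixed hs]
  rw [Finsupp.sum_sum_index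
    (fun a' => by simp only [zero_mul, Finsupp.single_zero, Finsupp.sum, Finset.sum_const_zero])
    (fun a' r1 r2 => by simp only [add_mul, Finsupp.single_add, Finsupp.sum_add])]
  refine Finsupp.sum_congr fun c _ => ?_
  rw [Finsupp.sum_single_index
    (by simp only [zero_mul, Finsupp.single_zero, Finsupp.sum, Finset.sum_const_zero])]

include hs hR in
lemma R2form (a b : G) (r t : R) :
    P.mul (Finsupp.single a r) (P.mul (Finsupp.single b t) s)
      = (P.π a t).sum fun c x => s.sum fun e se =>
          Finsupp.single ((c * b) * e) (r * (x * se)) := by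
  rw [P.single_mul_fixed hs, P.single_mul]
  rw [Finsupp.sum_sum_index
    (fun b' => by rw [pi_zero, Finsupp.sum_zero_index])
    (fun b' s1 s2 => by
      rw [P.d3]
      exact Finsupp.sum_add_index' (fun c => by simp)
        (fun c t1 t2 => by simp only [mul_add, Finsupp.single_add]))]
  have step1 : (s.sum fun e se => (Finsupp.single (b * e) (t * se)).sum
        fun b' s' => (P.π a s').sum fun d y => Finsupp.single (d * b') (r * y))
      = s.sum fun e se => (P.π a t).sum fun d y =>
          Finsupp.single (d * (b * e)) (r * (y * se)) := by
    refine Finsupp.sum_congr fun e _ => ?_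
    rw [Finsupp.sum_single_index (by rw [pi_zero, Finsupp.sum_zero_index])]
    have hmap : P.π a (t * s e)
        = (P.π a t).mapRange (fun y => y * s e) (zero_mul _) :=
      Finsupp.ext fun d => by
        rw [Finsupp.mapRange_apply]; exact hR a d t (s e) (hs e)
    rw [hmap, Finsupp.sum_mapRange_index (fun d => by simp)]
  rw [step1, Finsupp.sum_comm]
  exact Finsupp.sum_congr fun d _ => Finsupp.sum_congr fun e _ => by rw [mul_assoc]

include hs hR in
lemma core8 (a b : G) (r t : R) :
    P.assocS (Finsupp.single a r) (Finsupp.single b t) s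
      = (P.π a t).sum fun c x => s.sum fun e se =>
          Finsupp.single ((c * b) * e) ((r * x) * se - r * (x * se)) := by
  unfold assocS
  rw [P.L2form hs, P.R2form hs hR, ← Finsupp.sum_sub]
  refine Finsupp.sum_congr fun c _ => ?_
  rw [← Finsupp.sum_sub]
  exact Finsupp.sum_congr fun e _ => (Finsupp.single_sub _ _ _).symm

include hs hR in
lemma key8 (a b : G) (r t : R) :
    P.assocS (Finsupp.single a r) (Finsupp.single b t) s
      = (P.π a t).sum fun c x =>
          P.mul (P.assocS (Finsupp.single 1 r) (Finsupp.single 1 x) s)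
            (Finsupp.single (c * b) 1) := by
  have hB : ∀ x : R, P.assocS (Finsupp.single 1 r) (Finsupp.single 1 x) s
      = s.sum fun e se => Finsupp.single e ((r * x) * se - r * (x * se)) := by
    intro x
    rw [P.core8 hs hR, P.d1, Finsupp.sum_single_index
      (by simp only [mul_zero, zero_mul, zero_sub, mul_zero, neg_zero,
        Finsupp.single_zero, Finsupp.sum, Finset.sum_const_zero, sub_zero]
        )]
    exact Finsupp.sum_congr fun e _ => by rw [one_mul, one_mul]
  have hmulB : ∀ (x : R) (g : G),
      P.mul (P.assocS (Finsupp.single 1 r) (Finsupp.single 1 x) s)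
          (Finsupp.single g 1)
        = s.sum fun e se =>
            Finsupp.single (e * g) ((r * x) * se - r * (x * se)) := by
    intro x g
    rw [hB, P.mul_single_right]
    rw [Finsupp.sum_sum_index
      (fun a' => by simp only [zero_mul, Finsupp.single_zero, Finsupp.sum, Finset.sum_const_zero])
      (fun a' r1 r2 => by simp only [add_mul, Finsupp.single_add, Finsupp.sum_add])]
    refine Finsupp.sum_congr fun e _ => ?_
    rw [Finsupp.sum_single_index
      (by simp only [zero_mul, Finsupp.single_zero, Finsupp.sum, Finset.sum_const_zero])]
    rw [P.d2, Finsupp.sum_single_index (by simp), mul_one]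
  rw [P.core8 hs hR]
  refine Finsupp.sum_congr fun c _ => ?_
  rw [hmulB]
  exact Finsupp.sum_congr fun e _ => by rw [mul_comm (c * b) e]

include hs hR in
lemma mem8 (u v : G →₀ R) :
    P.assocS u v s ∈ AddSubgroup.closure
      {z : G →₀ R | ∃ (r t : R) (w : G →₀ R),
        z = P.mul (P.assocS (Finsupp.single 1 r) (Finsupp.single 1 t) s) w} := by
  have hal : ∀ u u' v : G →₀ R,
      P.assocS (u + u') v s = P.assocS u v s + P.assocS u' v s := by
    intro u u' v
    unfold assocS
    rw [P.add_mul', P.add_mul', P.add_mul']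
    abel
  have ham : ∀ u v v' : G →₀ R,
      P.assocS u (v + v') s = P.assocS u v s + P.assocS u v' s := by
    intro u v v'
    unfold assocS
    rw [P.mul_add', P.add_mul', P.add_mul', P.mul_add']
    abel
  have hz1 : ∀ v : G →₀ R, P.assocS 0 v s = 0 := by
    intro v
    unfold assocS
    rw [P.zero_mul', P.zero_mul', P.zero_mul', sub_self]
  have hz2 : ∀ u : G →₀ R, P.assocS u 0 s = 0 := by
    intro u
    unfold assocS
    rw [P.mul_zero', P.zero_mul', P.mul_zero', sub_self]
  induction u using Finsupp.induction with
  | zero => rw [hz1]; exact AddSubgroup.zero_mem _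
  | single_add a r u' _ _ ih =>
    rw [hal]
    refine AddSubgroup.add_mem _ ?_ ih
    clear ih
    induction v using Finsupp.induction with
    | zero => rw [hz2]; exact AddSubgroup.zero_mem _
    | single_add b t v' _ _ ihv =>
      rw [ham]
      refine AddSubgroup.add_mem _ ?_ ihv
      rw [P.key8 hs hR, Finsupp.sum]
      exact AddSubgroup.sum_mem _ fun c _ =>
        AddSubgroup.subset_closure ⟨r, (P.π a t) c, Finsupp.single (c * b) 1, rfl⟩

end Right

end GDeriv


/-- Let `G` be commutative and `s ∈ S^G`.  If (D7) holds, then every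
associator `(u,s,v)` lies in the additive subgroup generated by `(r,s,t)·w`
(`r,t ∈ R`, `w ∈ S`); in particular `(r,s,t) = 0` for all `r,t ∈ R` implies
`s ∈ N_m(S)`.  If (D8) holds, then every `(u,v,s)` lies in the additive subgroup
generated by `(r,t,s)·w`; in particular `(r,t,s) = 0` for all `r,t ∈ R` implies
`s ∈ N_r(S)`. -/
theorem stmt6 {R : Type*} [NonAssocRing R] {G : Type*} [CommMonoid G]
    (P : GDeriv R G) {s : G →₀ R} (hs : s ∈ P.fixedS) :
    (P.LeftLinear →
      (∀ u v : G →₀ R, P.assocS u s v ∈ AddSubgroup.closure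
        {z : G →₀ R | ∃ (r t : R) (w : G →₀ R),
          z = P.mul (P.assocS (Finsupp.single 1 r) s (Finsupp.single 1 t)) w}) ∧
      ((∀ r t : R, P.assocS (Finsupp.single 1 r) s (Finsupp.single 1 t) = 0) →
        s ∈ P.Nm)) ∧
    (P.RightLinear →
      (∀ u v : G →₀ R, P.assocS u v s ∈ AddSubgroup.closure
        {z : G →₀ R | ∃ (r t : R) (w : G →₀ R),
          z = P.mul (P.assocS (Finsupp.single 1 r) (Finsupp.single 1 t) s) w}) ∧
      ((∀ r t : R, P.assocS (Finsupp.single 1 r) (Finsupp.single 1 t) s = 0) →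
        s ∈ P.Nr)) := by
  constructor
  · intro hL
    refine ⟨fun u v => P.mem7 hs hL u v, ?_⟩
    intro h0
    show ∀ v w, P.assocS v s w = 0
    intro v w
    have hsub : {z : G →₀ R | ∃ (r t : R) (w : G →₀ R),
        z = P.mul (P.assocS (Finsupp.single 1 r) s (Finsupp.single 1 t)) w}
        ⊆ ((⊥ : AddSubgroup (G →₀ R)) : Set (G →₀ R)) := by
      rintro z ⟨r, t, w', rfl⟩
      rw [h0, P.zero_mul']
      exact (⊥ : AddSubgroup (G →₀ R)).zero_mem
    exact AddSubgroup.mem_bot.mp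
      ((AddSubgroup.closure_le _).mpr hsub (P.mem7 hs hL v w))
  · intro hR
    refine ⟨fun u v => P.mem8 hs hR u v, ?_⟩
    intro h0
    show ∀ v w, P.assocS v w s = 0
    intro v w
    have hsub : {z : G →₀ R | ∃ (r t : R) (w : G →₀ R),
        z = P.mul (P.assocS (Finsupp.single 1 r) (Finsupp.single 1 t) s) w}
        ⊆ ((⊥ : AddSubgroup (G →₀ R)) : Set (G →₀ R)) := by
      rintro z ⟨r, t, w', rfl⟩
      rw [h0, P.zero_mul']
      exact (⊥ : AddSubgroup (G →₀ R)).zero_mem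
    exact AddSubgroup.mem_bot.mp
      ((AddSubgroup.closure_le _).mpr hsub (P.mem8 hs hR v w))
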